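/- Closed form of the alpha divergence between shifted Laplace distributions: for μ > 0, b > 0, α > 1, the alpha divergence between Lap(0, b) and Lap(μ, b) equals exp((α−1)μ/b)/((α−1)(2α−1)) + exp(−αμ/b)/(α(2α−1)) − 1/(α(α−1)). -/

import Mathlib

open MeasureTheory Real Set

lemma exp_lin_intervalInt (a b c d : ℝ) (hc : c ≠ 0) :
    ∫ x in a..b, Real.exp (c * x + d) = (Real.exp (c * b + d) - Real.exp (c * a + d)) / c := by
  rw [intervalIntegral.integral_comp_mul_add Real.exp hc d, integral_exp, smul_eq_mul]
  ring

lemma exp_lin_Ioi_integral (a c d : ℝ) (hc : 0 < c) :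
    ∫ x in Ioi a, Real.exp (-(c * x) + d) = Real.exp (-(c * a) + d) / c := by
  have h : ∀ x : ℝ, Real.exp (-(c * x) + d) = Real.exp (-(c * x)) * Real.exp d := fun x => by
    rw [← Real.exp_add]
  simp_rw [h]
  rw [MeasureTheory.integral_mul_const]
  have h2 : (∫ x in Ioi a, Real.exp (-(c * x))) = c⁻¹ • ∫ x in Ioi (c * a), Real.exp (-x) :=
    integral_comp_mul_left_Ioi (fun u => Real.exp (-u)) a hc
  rw [h2, integral_exp_neg_Ioi, smul_eq_mul]
  rw [div_eq_mul_inv]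
  ring

lemma exp_lin_Ioi_integrable (a c d : ℝ) (hc : 0 < c) :
    IntegrableOn (fun x => Real.exp (-(c * x) + d)) (Ioi a) := by
  have h := (exp_neg_integrableOn_Ioi a hc).mul_const (Real.exp d)
  exact IntegrableOn.congr_fun h (fun x _ => by rw [← Real.exp_add, neg_mul]) measurableSet_Ioi

lemma exp_lin_Iic_integral (a c d : ℝ) (hc : 0 < c) :
    ∫ x in Iic a, Real.exp (c * x + d) = Real.exp (c * a + d) / c := by
  have h1 := integral_comp_neg_Ioi (-a) (fun y => Real.exp (c * y + d))
  rw [neg_neg] at h1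
  rw [← h1]
  have h2 : ∀ x : ℝ, (fun y => Real.exp (c * y + d)) (-x) = Real.exp (-(c * x) + d) := by
    intro x; simp only; ring_nf
  simp_rw [h2]
  rw [exp_lin_Ioi_integral (-a) c d hc]
  ring_nf

lemma exp_lin_Iic_integrable (a c d : ℝ) (hc : 0 < c) :
    IntegrableOn (fun x => Real.exp (c * x + d)) (Iic a) := by
  refine integrableOn_Iic_of_intervalIntegral_norm_bounded
    (Real.exp (c * a + d) / c) a (fun y => ?_) Filter.tendsto_id
    (Filter.Eventually.of_forall fun y => ?_)
  · exact (Real.continuous_exp.comp (by continuity)).integrableOn_Ioc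
  · simp_rw [Real.norm_eq_abs, Real.abs_exp]
    rw [exp_lin_intervalInt _ _ _ _ hc.ne']
    have h1 := Real.exp_pos (c * (id y) + d)
    gcongr
    linarith

/-- Closed form of the alpha divergence between shifted Laplace distributions.
With `p` the density of `Lap(0,b)` and `q` the density of `Lap(μ,b)` (`μ > 0`, `b > 0`), and
`α > 1`, the alpha divergence `(1/(α(α−1)))(∫ p^α q^{1−α} dx − 1)` equals
`exp((α−1)μ/b)/((α−1)(2α−1)) + exp(−αμ/b)/(α(2α−1)) − 1/(α(α−1))`. -/
theorem laplace_alphaDivergence (b μ α : ℝ) (hb : 0 < b) (hμ : 0 < μ) (hα : 1 < α) :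
    (1 / (α * (α - 1))) *
        ((∫ x : ℝ, ((1 / (2 * b)) * Real.exp (-|x - 0| / b)) ^ α
            * ((1 / (2 * b)) * Real.exp (-|x - μ| / b)) ^ (1 - α)) - 1)
      = Real.exp ((α - 1) * μ / b) / ((α - 1) * (2 * α - 1))
        + Real.exp (-(α * μ) / b) / (α * (2 * α - 1))
        - 1 / (α * (α - 1)) := by
  have hc : (0:ℝ) < 1 / (2 * b) := by positivity
  have hbinv : (0:ℝ) < 1 / b := by positivity
  set g : ℝ → ℝ := fun x => Real.exp ((α * (-|x|) + (1 - α) * (-|x - μ|)) / b) with hg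
  -- pointwise rewriting of the integrand
  have hpt : ∀ x : ℝ,
      ((1 / (2 * b)) * Real.exp (-|x - 0| / b)) ^ α
        * ((1 / (2 * b)) * Real.exp (-|x - μ| / b)) ^ (1 - α)
      = (1 / (2 * b)) * g x := by
    intro x
    rw [sub_zero, hg]
    rw [Real.mul_rpow hc.le (Real.exp_pos _).le, Real.mul_rpow hc.le (Real.exp_pos _).le]
    rw [← Real.exp_mul, ← Real.exp_mul]
    have h1 : (1 / (2 * b)) ^ α * Real.exp (-|x| / b * α)
          * ((1 / (2 * b)) ^ (1 - α) * Real.exp (-|x - μ| / b * (1 - α)))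
        = ((1 / (2 * b)) ^ α * (1 / (2 * b)) ^ (1 - α))
          * (Real.exp (-|x| / b * α) * Real.exp (-|x - μ| / b * (1 - α))) := by ring
    rw [h1, ← Real.rpow_add hc, show α + (1 - α) = (1:ℝ) by ring, Real.rpow_one,
      ← Real.exp_add]
    congr 1
    ring
  simp_rw [hpt]
  rw [MeasureTheory.integral_const_mul]
  -- the three linear pieces
  set f1 : ℝ → ℝ := fun x => Real.exp ((1 / b) * x + (α - 1) * μ / b) with hf1
  set f2 : ℝ → ℝ := fun x => Real.exp (((1 - 2 * α) / b) * x + (α - 1) * μ / b) with hf2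
  set f3 : ℝ → ℝ := fun x => Real.exp (-((1 / b) * x) + (1 - α) * μ / b) with hf3
  have heq1 : EqOn f1 g (Iic 0) := by
    intro x hx
    have hx' : x ≤ 0 := hx
    rw [hf1, hg]
    simp only
    rw [abs_of_nonpos hx', abs_of_nonpos (by linarith : x - μ ≤ 0)]
    congr 1
    field_simp
    ring
  have heq2 : EqOn f2 g (Ioc 0 μ) := by
    intro x hx
    rw [hf2, hg]
    simp only
    rw [abs_of_pos hx.1, abs_of_nonpos (by linarith [hx.2] : x - μ ≤ 0)]
    congr 1
    field_simp
    ring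
  have heq3 : EqOn f3 g (Ioi μ) := by
    intro x hx
    have hx' : μ < x := hx
    rw [hf3, hg]
    simp only
    rw [abs_of_pos (lt_trans hμ hx'), abs_of_pos (by linarith : (0:ℝ) < x - μ)]
    congr 1
    field_simp
    ring
  -- integrability
  have hint1 : IntegrableOn g (Iic 0) :=
    (exp_lin_Iic_integrable 0 (1 / b) ((α - 1) * μ / b) hbinv).congr_fun heq1 measurableSet_Iic
  have hint2 : IntegrableOn g (Ioc 0 μ) := by
    refine ((Real.continuous_exp.comp (by continuity)).integrableOn_Ioc).congr_fun heq2
      measurableSet_Ioc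
  have hint3 : IntegrableOn g (Ioi μ) :=
    (exp_lin_Ioi_integrable μ (1 / b) ((1 - α) * μ / b) hbinv).congr_fun heq3 measurableSet_Ioi
  have hintIoi : IntegrableOn g (Ioi 0) := by
    have := hint2.union hint3
    rwa [Ioc_union_Ioi_eq_Ioi hμ.le] at this
  -- split the integral
  have hsplit : (∫ x : ℝ, g x)
      = (∫ x in Iic 0, g x) + ((∫ x in Ioc 0 μ, g x) + ∫ x in Ioi μ, g x) := by
    rw [← intervalIntegral.integral_Iic_add_Ioi hint1 hintIoi]
    congr 1
    rw [← Ioc_union_Ioi_eq_Ioi hμ.le,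
      setIntegral_union Ioc_disjoint_Ioi_same measurableSet_Ioi hint2 hint3]
  -- compute each piece
  have hI1 : (∫ x in Iic 0, g x) = b * Real.exp ((α - 1) * μ / b) := by
    rw [← setIntegral_congr_fun measurableSet_Iic heq1, hf1]
    rw [exp_lin_Iic_integral 0 (1 / b) ((α - 1) * μ / b) hbinv]
    rw [show (1 / b) * 0 + (α - 1) * μ / b = (α - 1) * μ / b by ring]
    field_simp
  have hI2 : (∫ x in Ioc 0 μ, g x)
      = (Real.exp (-(α * μ) / b) - Real.exp ((α - 1) * μ / b)) / ((1 - 2 * α) / b) := by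
    rw [← setIntegral_congr_fun measurableSet_Ioc heq2, hf2]
    rw [← intervalIntegral.integral_of_le hμ.le]
    rw [exp_lin_intervalInt 0 μ ((1 - 2 * α) / b) ((α - 1) * μ / b)
      (by
        have h0 : (1 - 2 * α) < 0 := by linarith
        exact div_ne_zero h0.ne hb.ne')]
    rw [show (1 - 2 * α) / b * μ + (α - 1) * μ / b = -(α * μ) / b by field_simp; ring,
      show (1 - 2 * α) / b * 0 + (α - 1) * μ / b = (α - 1) * μ / b by ring]
  have hI3 : (∫ x in Ioi μ, g x) = b * Real.exp (-(α * μ) / b) := by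
    rw [← setIntegral_congr_fun measurableSet_Ioi heq3, hf3]
    rw [exp_lin_Ioi_integral μ (1 / b) ((1 - α) * μ / b) hbinv]
    rw [show -((1 / b) * μ) + (1 - α) * μ / b = -(α * μ) / b by field_simp; ring]
    field_simp
  rw [hsplit, hI1, hI2, hI3]
  have h2α : (2 * α - 1) ≠ 0 := by nlinarith
  have h1α : (1 - 2 * α) ≠ 0 := by nlinarith
  have hα1 : (α - 1) ≠ 0 := by nlinarith
  have hα0 : α ≠ 0 := by nlinarith
  field_simp
  rw [show (1 - α * 2) = -(-1 + α * 2) by ring, div_neg, show (-1 + α * 2) = α * 2 - 1 by ring]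
  have h2α' : α * 2 - 1 ≠ 0 := by linarith
  field_simp
  ring
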